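/- Let ν ∈ int(T), ν_c ∈ C(ν), and r ∈ [R_ν]. If both the r'th row of W^(ν) is zero (W^(ν)_{r,:} = 0) and the r'th column of W^(ν_c) is zero (W^(ν_c)_{:,r} = 0), then the partial derivative of the objective φ_H with respect to W^(ν)_{r,:} is zero and the partial derivative of φ_H with respect to W^(ν_c)_{:,r} is zero at these weights. -/

import Mathlib

namespace HTF

/-- Rooted tree whose leaves are labeled by elements of `Fin N`. -/
inductive MTree (N : ℕ) : Type
  | leaf : Fin N → MTree N
  | node : List (MTree N) → MTree N

noncomputable instance {N : ℕ} : DecidableEq (MTree N) := fun _ _ => Classical.dec _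

namespace MTree

variable {N : ℕ}

/-- The list of leaf labels of the tree. -/
def leafList : MTree N → List (Fin N)
  | .leaf i => [i]
  | .node ts => ts.attach.flatMap fun t => t.1.leafList
decreasing_by simp only [MTree.node.sizeOf_spec]; have := List.sizeOf_lt_of_mem t.2; omega

/-- The label of a node: set of leaf indices appearing in its subtree. -/
def label (t : MTree N) : Finset (Fin N) := t.leafList.toFinset

/-- All nodes (subtrees) of the tree. -/
def nodes : MTree N → List (MTree N)
  | .leaf i => [.leaf i]
  | .node ts => .node ts :: ts.attach.flatMap fun t => t.1.nodes
decreasing_by simp only [MTree.node.sizeOf_spec]; have := List.sizeOf_lt_of_mem t.2; omega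

/-- The children of a node. -/
def children : MTree N → List (MTree N)
  | .leaf _ => []
  | .node ts => ts

/-- Interior (non-leaf) node. -/
def IsInterior : MTree N → Prop
  | .leaf _ => False
  | .node _ => True

/-- Every non-leaf node has at least one child. -/
def Branching : MTree N → Prop
  | .leaf _ => True
  | .node ts => ts ≠ [] ∧ ∀ t ∈ ts.attach, Branching t.1
decreasing_by simp only [MTree.node.sizeOf_spec]; have := List.sizeOf_lt_of_mem t.2; omega

/-- A valid mode tree over `[N]`: it has exactly `N` leaves, labeled `{1},...,{N}`
(each index appearing exactly once), and interior nodes have children. -/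
def Valid (t : MTree N) : Prop :=
  t.leafList.Nodup ∧ (∀ i : Fin N, i ∈ t.leafList) ∧ t.Branching

/-- The parent of node `ν` in the tree (first argument), if it exists. -/
noncomputable def parentIn : MTree N → MTree N → Option (MTree N)
  | .leaf _, _ => none
  | .node ts, ν =>
      if ν ∈ ts then some (.node ts)
      else ts.attach.findSome? fun t => parentIn t.1 ν
termination_by T _ => sizeOf T
decreasing_by simp only [MTree.node.sizeOf_spec]; have := List.sizeOf_lt_of_mem t.2; omega

end MTree

open MTree

variable {N : ℕ} (D : Fin N → ℕ)

/-- Full index set of an order-`N` tensor with mode dimensions `D`. -/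
abbrev Idx : Type := ∀ n, Fin (D n)

/-- The intermediate tensors `W^(ν,r)` of a hierarchical tensor factorization with
local-component numbers `R` and weight matrices `W` (columns indexed by `ℕ`).
An order-`|label ν|` tensor is represented as a function of a full index tuple that
only depends on the coordinates in `label ν`; with this representation, the tensor
product of tensors over disjoint mode sets is pointwise multiplication and the mode
permutation `π_ν` is the identity. -/
noncomputable def interm (R : MTree N → ℕ) (W : ∀ ν : MTree N, Fin (R ν) → ℕ → ℝ) :
    MTree N → ℕ → Idx D → ℝ
  | .leaf i, r => fun x =>
      if h : R (.leaf i) = D i then W (.leaf i) (Fin.cast h.symm (x i)) r else 0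
  | .node ts, r => fun x =>
      ∑ r' : Fin (R (.node ts)),
        W (.node ts) r' r * (ts.attach.map fun t => interm R W t.1 (r' : ℕ) x).prod
decreasing_by simp only [MTree.node.sizeOf_spec]; have := List.sizeOf_lt_of_mem t.2; omega

/-- The end tensor `W_H` of the hierarchical tensor factorization with mode tree `T`. -/
noncomputable def endT (R : MTree N → ℕ) (W : ∀ ν : MTree N, Fin (R ν) → ℕ → ℝ)
    (T : MTree N) : Idx D → ℝ :=
  interm D R W T 0

/-- Entry `(i, j)` of the weight matrix at node `ν` (zero outside the row range). -/
noncomputable def went (R : MTree N → ℕ) (W : ∀ ν : MTree N, Fin (R ν) → ℕ → ℝ)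
    (ν : MTree N) (i j : ℕ) : ℝ :=
  if h : i < R ν then W ν ⟨i, h⟩ j else 0

/-- `R_{Pa(ν)}` : the number of local components at the parent of `ν` in `T`
(`1` if `ν` is the root). -/
noncomputable def Rpar (R : MTree N → ℕ) (T ν : MTree N) : ℕ :=
  if ν = T then 1 else ((parentIn T ν).map R).getD 0

/-- Replace the weight matrix at node `μ` by `A`, keeping all other weight matrices. -/
noncomputable def replace (R : MTree N → ℕ) (W : ∀ ν : MTree N, Fin (R ν) → ℕ → ℝ)
    (μ : MTree N) (A : Fin (R μ) → ℕ → ℝ) : ∀ ν : MTree N, Fin (R ν) → ℕ → ℝ :=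
  fun ν => if h : ν = μ then fun i j => A (Fin.cast (congrArg R h) i) j else W ν

/-- Frobenius (Euclidean) inner product of order-`N` tensors. -/
noncomputable def tinner (A B : Idx D → ℝ) : ℝ := ∑ x, A x * B x

/-- Frobenius norm of an order-`N` tensor. -/
noncomputable def tnorm (A : Idx D → ℝ) : ℝ := Real.sqrt (∑ x, (A x) ^ 2)

/-- Frobenius norm of an order-`|s|` tensor represented as a function of a full index
tuple depending only on the coordinates in `s` (so that the sum over the full index
set over-counts each entry `∏_{n ∉ s} D n` times). -/
noncomputable def rnorm (s : Finset (Fin N)) (A : Idx D → ℝ) : ℝ :=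
  Real.sqrt ((∑ x, (A x) ^ 2) / ∏ n ∈ sᶜ, (D n : ℝ))

/-- Squared norm of the `r`'th column of the weight matrix at node `c`. -/
noncomputable def colSq (R : MTree N → ℕ) (W : ∀ ν : MTree N, Fin (R ν) → ℕ → ℝ)
    (c : MTree N) (r : ℕ) : ℝ :=
  ∑ i : Fin (R c), (W c i r) ^ 2

/-- Squared norm of the `r`'th row of the weight matrix at node `ν` of `T`. -/
noncomputable def rowSq (R : MTree N → ℕ) (W : ∀ ν : MTree N, Fin (R ν) → ℕ → ℝ)
    (T ν : MTree N) (r : ℕ) : ℝ :=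
  ∑ j : Fin (Rpar R T ν), (went R W ν r (j : ℕ)) ^ 2

/-- `σ^(ν,r)` : the norm of the `(ν,r)`'th local component, i.e. the product of the
norms of the vectors in `LC(ν,r)` (the `r`'th row of `W^(ν)` together with the `r`'th
columns of the weight matrices of the children of `ν`). -/
noncomputable def sigmaLoc (R : MTree N → ℕ) (W : ∀ ν : MTree N, Fin (R ν) → ℕ → ℝ)
    (T ν : MTree N) (r : ℕ) : ℝ :=
  Real.sqrt (rowSq R W T ν r) * (ν.children.map fun c => Real.sqrt (colSq R W c r)).prod

/-- `PadR_r(W^(ν)_{r,:})` : the matrix whose `r`'th row is the `r`'th row of `W^(ν)`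
and whose other rows are zero. -/
noncomputable def padRow (R : MTree N → ℕ) (W : ∀ ν : MTree N, Fin (R ν) → ℕ → ℝ)
    (ν : MTree N) (r : ℕ) : Fin (R ν) → ℕ → ℝ :=
  fun i j => if (i : ℕ) = r then W ν i j else 0

/-- `PadC_r(W^(c)_{:,r})` : the matrix whose `r`'th column is the `r`'th column of
`W^(c)` and whose other columns are zero. -/
noncomputable def padCol (R : MTree N → ℕ) (W : ∀ ν : MTree N, Fin (R ν) → ℕ → ℝ)
    (c : MTree N) (r : ℕ) : Fin (R c) → ℕ → ℝ :=
  fun i j => if j = r then W c i r else 0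

/-- `Ĉ^(ν,r)` : the end tensor obtained by normalizing the `r`'th local component at
`ν` and setting all other local components at `ν` to zero, i.e. the end tensor computed
with `W^(ν)` replaced by `σ^{-1} · PadR_r(W^(ν)_{r,:})` (and `0` if `σ^(ν,r) = 0`). -/
noncomputable def hatC (R : MTree N → ℕ) (W : ∀ ν : MTree N, Fin (R ν) → ℕ → ℝ)
    (T ν : MTree N) (r : ℕ) : Idx D → ℝ :=
  if sigmaLoc R W T ν r = 0 then 0
  else endT D R (replace R W ν fun i j =>
    if (i : ℕ) = r then (sigmaLoc R W T ν r)⁻¹ * W ν i j else 0) T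

/-- The objective `φ_H = L_H ∘ (end tensor)`. -/
noncomputable def obj (L : (Idx D → ℝ) → ℝ) (R : MTree N → ℕ) (T : MTree N)
    (W : ∀ ν : MTree N, Fin (R ν) → ℕ → ℝ) : ℝ :=
  L (endT D R W T)

/-- Update the single entry `(i, j)` of the weight matrix at node `μ` to the value `s`. -/
noncomputable def upd (R : MTree N → ℕ) (W : ∀ ν : MTree N, Fin (R ν) → ℕ → ℝ)
    (μ : MTree N) (i j : ℕ) (s : ℝ) : ∀ ν : MTree N, Fin (R ν) → ℕ → ℝ :=
  fun ν i' j' => if ν = μ ∧ (i' : ℕ) = i ∧ j' = j then s else W ν i' j'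

/-- `∂φ_H/∂W^(μ)_{i,j}` : the partial derivative of the objective with respect to the
`(i,j)` entry of the weight matrix at node `μ`, at the point `W`. -/
noncomputable def dObj (L : (Idx D → ℝ) → ℝ) (R : MTree N → ℕ) (T : MTree N)
    (W : ∀ ν : MTree N, Fin (R ν) → ℕ → ℝ) (μ : MTree N) (i j : ℕ) : ℝ :=
  deriv (fun s : ℝ => obj D L R T (upd R W μ i j s)) (went R W μ i j)

/-- `∇L(A)` : the gradient of a loss over tensors, entrywise. -/
noncomputable def tgrad (L : (Idx D → ℝ) → ℝ) (A : Idx D → ℝ) : Idx D → ℝ :=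
  fun x => deriv (fun s : ℝ => L (Function.update A x s)) (A x)

/-- Local smoothness of the loss: its gradient is Lipschitz on compact sets. -/
def LocSmooth (L : (Idx D → ℝ) → ℝ) : Prop :=
  ∀ K : Set (Idx D → ℝ), IsCompact K → ∃ β : NNReal, LipschitzOnWith β (tgrad D L) K

/-- Gradient flow over the objective: each entry of each weight matrix moves against
its partial derivative. -/
def GradFlow (L : (Idx D → ℝ) → ℝ) (R : MTree N → ℕ) (T : MTree N)
    (Wt : ℝ → ∀ ν : MTree N, Fin (R ν) → ℕ → ℝ) : Prop :=
  ∀ (ν : MTree N) (i : Fin (R ν)) (j : ℕ) (t : ℝ), 0 ≤ t →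
    HasDerivAt (fun s : ℝ => Wt s ν i j) (- dObj D L R T (Wt t) ν (i : ℕ) j) t

/-- The matricization of an order-`N` tensor according to the index set `I` : the
matrix whose rows are indexed by the modes in `I` and whose columns are indexed by the
remaining modes. -/
noncomputable def matricize (I : Finset (Fin N)) (A : Idx D → ℝ) :
    Matrix (∀ i : {n // n ∈ I}, Fin (D i)) (∀ j : {n // n ∉ I}, Fin (D j)) ℝ :=
  fun ρ κ => A fun n => if h : n ∈ I then ρ ⟨n, h⟩ else κ ⟨n, h⟩

/-- Frobenius norm of the weight matrix `W^(ν) ∈ ℝ^{R_ν × R_{Pa(ν)}}` at node `ν` of `T`. -/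
noncomputable def wFro (R : MTree N → ℕ) (W : ∀ ν : MTree N, Fin (R ν) → ℕ → ℝ)
    (T ν : MTree N) : ℝ :=
  Real.sqrt (∑ i : Fin (R ν), ∑ j : Fin (Rpar R T ν), (W ν i (j : ℕ)) ^ 2)

/-- The weights obtained by pruning the `(ν,r)`'th local component: the `r`'th row of
`W^(ν)` and the `r`'th column of `W^(c)` for every child `c` of `ν` are set to zero. -/
noncomputable def pruneLC (R : MTree N → ℕ) (W : ∀ ν : MTree N, Fin (R ν) → ℕ → ℝ)
    (ν : MTree N) (r : ℕ) : ∀ μ : MTree N, Fin (R μ) → ℕ → ℝ :=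
  fun μ i j =>
    if μ = ν ∧ (i : ℕ) = r then 0
    else if μ ∈ ν.children ∧ j = r then 0
    else W μ i j

end HTF

namespace HTF
namespace MTree
variable {N : ℕ}

theorem sizeOf_ind {P : MTree N → Prop}
    (h : ∀ t : MTree N, (∀ s : MTree N, sizeOf s < sizeOf t → P s) → P t) :
    ∀ t : MTree N, P t := fun t => h t (fun s _ => sizeOf_ind h s)
termination_by t => sizeOf t
decreasing_by assumption

theorem sizeOf_lt_of_mem_children {t x : MTree N} (h : x ∈ t.children) : sizeOf x < sizeOf t := by
  cases t with
  | leaf i => simp [children] at h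
  | node ts =>
    simp only [children] at h
    have := List.sizeOf_lt_of_mem h
    simp only [MTree.node.sizeOf_spec]; omega

theorem self_mem_nodes (t : MTree N) : t ∈ t.nodes := by
  cases t with
  | leaf i => rw [nodes]; exact List.mem_singleton.2 rfl
  | node ts => rw [nodes]; exact List.mem_cons_self

theorem sizeOf_le_of_mem_nodes : ∀ {T x : MTree N}, x ∈ T.nodes → sizeOf x ≤ sizeOf T := by
  intro T
  induction T using sizeOf_ind with
  | h T ih =>
    intro x hx
    cases T with
    | leaf i => rw [nodes] at hx; simp at hx; subst hx; rfl
    | node ts =>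
      rw [nodes] at hx
      rcases List.mem_cons.1 hx with h | h
      · subst h; rfl
      · rcases List.mem_flatMap.1 h with ⟨t, ht, hxt⟩
        have h1 : sizeOf t.1 < sizeOf (MTree.node ts) := by
          have := List.sizeOf_lt_of_mem t.2
          simp only [MTree.node.sizeOf_spec]; omega
        exact le_trans (ih t.1 h1 hxt) (le_of_lt h1)

theorem children_mem_nodes : ∀ {T t x : MTree N}, t ∈ T.nodes → x ∈ t.children → x ∈ T.nodes := by
  intro T
  induction T using sizeOf_ind with
  | h T ih =>
    intro t x ht hx
    cases T with
    | leaf i =>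
      rw [nodes] at ht; simp at ht; subst ht; simp [children] at hx
    | node ts =>
      rw [nodes] at ht
      rcases List.mem_cons.1 ht with h | h
      · subst h
        simp only [children] at hx
        rw [nodes]
        refine List.mem_cons.2 (Or.inr (List.mem_flatMap.2 ⟨⟨x, hx⟩, List.mem_attach _ _, self_mem_nodes x⟩))
      · rcases List.mem_flatMap.1 h with ⟨a, ha, hta⟩
        have h1 : sizeOf a.1 < sizeOf (MTree.node ts) := by
          have := List.sizeOf_lt_of_mem a.2
          simp only [MTree.node.sizeOf_spec]; omega
        rw [nodes]
        exact List.mem_cons.2 (Or.inr (List.mem_flatMap.2 ⟨a, ha, ih a.1 h1 hta hx⟩))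

theorem leafList_subset_of_mem_children {t x : MTree N} (h : x ∈ t.children) :
    ∀ ℓ ∈ x.leafList, ℓ ∈ t.leafList := by
  cases t with
  | leaf i => simp [children] at h
  | node ts =>
    simp only [children] at h
    intro ℓ hℓ
    rw [leafList]
    exact List.mem_flatMap.2 ⟨⟨x, h⟩, List.mem_attach _ _, hℓ⟩

theorem leafList_subset_of_mem_nodes : ∀ {T t : MTree N}, t ∈ T.nodes →
    ∀ ℓ ∈ t.leafList, ℓ ∈ T.leafList := by
  intro T
  induction T using sizeOf_ind with
  | h T ih =>
    intro t ht ℓ hℓ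
    cases T with
    | leaf i => rw [nodes] at ht; simp at ht; subst ht; exact hℓ
    | node ts =>
      rw [nodes] at ht
      rcases List.mem_cons.1 ht with h | h
      · subst h; exact hℓ
      · rcases List.mem_flatMap.1 h with ⟨a, ha, hta⟩
        have h1 : sizeOf a.1 < sizeOf (MTree.node ts) := by
          have := List.sizeOf_lt_of_mem a.2
          simp only [MTree.node.sizeOf_spec]; omega
        rw [leafList]
        exact List.mem_flatMap.2 ⟨a, List.mem_attach _ _, ih a.1 h1 hta ℓ hℓ⟩

theorem nodup_child {ts : List (MTree N)} (h : (MTree.node ts).leafList.Nodup)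
    {t : MTree N} (ht : t ∈ ts) : t.leafList.Nodup := by
  rw [leafList, List.flatMap_def] at h
  exact (List.nodup_flatten.1 h).1 t.leafList
    (List.mem_map.2 ⟨⟨t, ht⟩, List.mem_attach _ _, rfl⟩)

theorem nodup_of_mem_nodes : ∀ {T t : MTree N}, t ∈ T.nodes → T.leafList.Nodup →
    t.leafList.Nodup := by
  intro T
  induction T using sizeOf_ind with
  | h T ih =>
    intro t ht hnd
    cases T with
    | leaf i => rw [nodes] at ht; simp at ht; subst ht; exact hnd
    | node ts =>
      rw [nodes] at ht
      rcases List.mem_cons.1 ht with h | h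
      · subst h; exact hnd
      · rcases List.mem_flatMap.1 h with ⟨a, ha, hta⟩
        have h1 : sizeOf a.1 < sizeOf (MTree.node ts) := by
          have := List.sizeOf_lt_of_mem a.2
          simp only [MTree.node.sizeOf_spec]; omega
        exact ih a.1 h1 hta (nodup_child hnd a.2)

theorem branching_of_mem_nodes : ∀ {T t : MTree N}, t ∈ T.nodes → T.Branching →
    t.Branching := by
  intro T
  induction T using sizeOf_ind with
  | h T ih =>
    intro t ht hb
    cases T with
    | leaf i => rw [nodes] at ht; simp at ht; subst ht; exact hb
    | node ts =>
      rw [nodes] at ht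
      rcases List.mem_cons.1 ht with h | h
      · subst h; exact hb
      · rcases List.mem_flatMap.1 h with ⟨a, ha, hta⟩
        have h1 : sizeOf a.1 < sizeOf (MTree.node ts) := by
          have := List.sizeOf_lt_of_mem a.2
          simp only [MTree.node.sizeOf_spec]; omega
        rw [Branching] at hb
        exact ih a.1 h1 hta (hb.2 a (List.mem_attach _ _))

theorem leafList_ne_nil : ∀ {t : MTree N}, t.Branching → t.leafList ≠ [] := by
  intro t
  induction t using sizeOf_ind with
  | h t ih =>
    intro hb
    cases t with
    | leaf i => rw [leafList]; simp
    | node ts =>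
      rw [Branching] at hb
      rcases List.exists_mem_of_ne_nil ts hb.1 with ⟨t0, ht0⟩
      have h1 : sizeOf t0 < sizeOf (MTree.node ts) := by
        have := List.sizeOf_lt_of_mem ht0
        simp only [MTree.node.sizeOf_spec]; omega
      have hne := ih t0 h1 (hb.2 ⟨t0, ht0⟩ (List.mem_attach _ _))
      rcases List.exists_mem_of_ne_nil _ hne with ⟨ℓ, hℓ⟩
      rw [leafList]
      intro hnil
      rw [List.eq_nil_iff_forall_not_mem] at hnil
      exact hnil ℓ (List.mem_flatMap.2 ⟨⟨t0, ht0⟩, List.mem_attach _ _, hℓ⟩)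

theorem disjoint_leaves {ts : List (MTree N)} (h : (MTree.node ts).leafList.Nodup)
    {a b : MTree N} (ha : a ∈ ts) (hb : b ∈ ts) (hne : a ≠ b) :
    ∀ ℓ, ℓ ∈ a.leafList → ℓ ∈ b.leafList → False := by
  rw [leafList, List.flatMap_def] at h
  have hpw := (List.nodup_flatten.1 h).2
  rw [List.pairwise_map] at hpw
  have hsym : Symmetric (fun x y : {t // t ∈ ts} => List.Disjoint x.1.leafList y.1.leafList) :=
    fun x y hxy => hxy.symm
  haveI : Std.Symm (fun x y : {t // t ∈ ts} => List.Disjoint x.1.leafList y.1.leafList) :=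
    ⟨fun x y hxy => hsym hxy⟩
  have := hpw.forall (List.mem_attach ts ⟨a, ha⟩) (List.mem_attach ts ⟨b, hb⟩)
    (by intro hh; exact hne (congrArg Subtype.val hh))
  exact fun ℓ h1 h2 => this h1 h2

end MTree
end HTF
namespace HTF
namespace MTree
variable {N : ℕ}

theorem findSome?_some {α β : Type*} {f : α → Option β} : ∀ {l : List α} {b : β},
    l.findSome? f = some b → ∃ a ∈ l, f a = some b := by
  intro l
  induction l with
  | nil => intro b h; simp [List.findSome?] at h
  | cons x xs ih =>
    intro b h
    rw [List.findSome?_cons] at h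
    cases hfx : f x with
    | some y => rw [hfx] at h; exact ⟨x, List.mem_cons_self, hfx.trans h⟩
    | none =>
      rw [hfx] at h
      rcases ih h with ⟨a, ha, hfa⟩
      exact ⟨a, List.mem_cons_of_mem _ ha, hfa⟩

theorem findSome?_eq_some_of {α β : Type*} {f : α → Option β} {b : β} :
    ∀ {l : List α}, (∃ a ∈ l, f a = some b) → (∀ a ∈ l, f a = none ∨ f a = some b) →
    l.findSome? f = some b := by
  intro l
  induction l with
  | nil => rintro ⟨a, ha, _⟩ _; simp at ha
  | cons x xs ih =>
    rintro ⟨a, ha, hfa⟩ hall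
    rw [List.findSome?_cons]
    rcases hall x List.mem_cons_self with hx | hx
    · rw [hx]
      rcases List.mem_cons.1 ha with rfl | ha'
      · rw [hfa] at hx; exact absurd hx (by simp)
      · exact ih ⟨a, ha', hfa⟩ (fun a' ha' => hall a' (List.mem_cons_of_mem _ ha'))
    · rw [hx]

theorem parentIn_sound : ∀ {T x p : MTree N}, parentIn T x = some p →
    x ∈ p.children ∧ ∀ ℓ ∈ x.leafList, ℓ ∈ T.leafList := by
  intro T
  induction T using sizeOf_ind with
  | h T ih =>
    intro x p hp
    cases T with
    | leaf i => rw [parentIn] at hp; exact absurd hp (by simp)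
    | node ts =>
      rw [parentIn] at hp
      split at hp
      · next hx =>
        injection hp with hp
        subst hp
        exact ⟨hx, leafList_subset_of_mem_children hx⟩
      · next hx =>
        rcases findSome?_some hp with ⟨a, _, hfa⟩
        have h1 : sizeOf a.1 < sizeOf (MTree.node ts) := by
          have := List.sizeOf_lt_of_mem a.2
          simp only [MTree.node.sizeOf_spec]; omega
        rcases ih a.1 h1 hfa with ⟨h2, h3⟩
        refine ⟨h2, fun ℓ hℓ => ?_⟩
        rw [leafList]
        exact List.mem_flatMap.2 ⟨a, List.mem_attach _ _, h3 ℓ hℓ⟩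

theorem parentIn_eq : ∀ {T : MTree N}, T.leafList.Nodup → T.Branching →
    ∀ {μ x : MTree N}, μ ∈ T.nodes → x ∈ μ.children → parentIn T x = some μ := by
  intro T
  induction T using sizeOf_ind with
  | h T ih =>
    intro hnd hb μ x hμ hx
    cases T with
    | leaf i =>
      rw [nodes] at hμ; simp at hμ; subst hμ; simp [children] at hx
    | node ts =>
      rw [nodes] at hμ
      have hμ' : μ ∈ (MTree.node ts).nodes := by rw [MTree.nodes]; exact hμ
      have hxB : x.Branching := branching_of_mem_nodes (children_mem_nodes hμ' hx) hb
      rcases List.mem_cons.1 hμ with h | h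
      · subst h
        rw [parentIn]
        simp only [children] at hx
        rw [if_pos hx]
      · rcases List.mem_flatMap.1 h with ⟨a, _, hμa⟩
        have h1 : sizeOf a.1 < sizeOf (MTree.node ts) := by
          have := List.sizeOf_lt_of_mem a.2
          simp only [MTree.node.sizeOf_spec]; omega
        -- leaves of x are inside a.1
        have hxsub : ∀ ℓ ∈ x.leafList, ℓ ∈ a.1.leafList := fun ℓ hℓ =>
          leafList_subset_of_mem_nodes hμa ℓ (leafList_subset_of_mem_children hx ℓ hℓ)
        rcases List.exists_mem_of_ne_nil _ (leafList_ne_nil hxB) with ⟨ℓ0, hℓ0⟩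
        -- x ∉ ts
        have hxts : x ∉ ts := by
          intro hxts
          by_cases hxa : x = a.1
          · subst hxa
            have h2 := sizeOf_le_of_mem_nodes hμa
            have h3 := sizeOf_lt_of_mem_children hx
            omega
          · exact disjoint_leaves hnd hxts a.2 hxa ℓ0 hℓ0 (hxsub ℓ0 hℓ0)
        rw [parentIn, if_neg hxts]
        -- recursive facts about a.1
        have hndA : a.1.leafList.Nodup := nodup_child hnd a.2
        have hbA : a.1.Branching := by
          rw [Branching] at hb
          exact hb.2 a (List.mem_attach _ _)
        have hsome : parentIn a.1 x = some μ := ih a.1 h1 hndA hbA hμa hx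
        refine findSome?_eq_some_of ⟨a, List.mem_attach _ _, hsome⟩ ?_
        intro a' _
        by_cases haa : a'.1 = a.1
        · right
          cases a' with
          | mk v hv =>
            cases a with
            | mk w hw =>
              simp only at haa
              subst haa
              exact hsome
        · left
          cases hpa : parentIn a'.1 x with
          | none => rfl
          | some p =>
            exfalso
            rcases parentIn_sound hpa with ⟨_, hsub'⟩
            exact disjoint_leaves hnd a'.2 a.2 haa ℓ0 (hsub' ℓ0 hℓ0) (hxsub ℓ0 hℓ0)

end MTree
end HTF
namespace HTF
open MTree
variable {N : ℕ}

theorem sizeOf_attach_lt {ts : List (MTree N)} (a : {t // t ∈ ts}) :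
    sizeOf a.1 < sizeOf (MTree.node ts) := by
  have := List.sizeOf_lt_of_mem a.2
  simp only [MTree.node.sizeOf_spec]; omega

theorem interm_col_zero (D : Fin N → ℕ) (R : MTree N → ℕ)
    (W : ∀ ν : MTree N, Fin (R ν) → ℕ → ℝ) (c : MTree N) (r : ℕ)
    (h : ∀ i : Fin (R c), W c i r = 0) (x : Idx D) : interm D R W c r x = 0 := by
  cases c with
  | leaf i =>
    rw [interm]
    split
    · exact h _
    · rfl
  | node ts =>
    rw [interm]
    exact Finset.sum_eq_zero fun r' _ => by rw [h r', zero_mul]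

theorem interm_upd_row (D : Fin N → ℕ) (R : MTree N → ℕ)
    (W : ∀ ν : MTree N, Fin (R ν) → ℕ → ℝ) (ν c : MTree N)
    (hc : c ∈ ν.children) (r : Fin (R ν)) (j : ℕ) (s : ℝ)
    (hcol : ∀ i : Fin (R c), W c i (r : ℕ) = 0) :
    ∀ (μ : MTree N) (k : ℕ) (x : Idx D),
      interm D R (upd R W ν (r : ℕ) j s) μ k x = interm D R W μ k x := by
  have hνleaf : ∀ i0 : Fin N, ν ≠ MTree.leaf i0 := by
    intro i0 h; rw [h] at hc; simp [children] at hc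
  intro μ
  induction μ using sizeOf_ind with
  | h μ ih =>
    intro k x
    cases μ with
    | leaf i0 =>
      have hW : upd R W ν (r : ℕ) j s (.leaf i0) = W (.leaf i0) := by
        funext a b
        simp only [upd]
        rw [if_neg]
        rintro ⟨h1, -⟩
        exact hνleaf i0 h1.symm
      rw [interm, interm, hW]
    | node ts =>
      rw [interm, interm]
      refine Finset.sum_congr rfl fun r' _ => ?_
      by_cases hμν : MTree.node ts = ν
      · subst hμν
        have hcts : c ∈ ts := by simpa [children] using hc
        have hcnu : c ≠ MTree.node ts := by
          have := sizeOf_lt_of_mem_children hc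
          intro h; rw [h] at this; omega
        by_cases hrr : (r' : ℕ) = (r : ℕ)
        · have hzero1 : (ts.attach.map fun t => interm D R W t.1 (r' : ℕ) x).prod = 0 := by
            apply List.prod_eq_zero
            refine List.mem_map.2 ⟨⟨c, hcts⟩, List.mem_attach _ _, ?_⟩
            rw [hrr]; exact interm_col_zero D R W c _ hcol x
          have hzero2 : (ts.attach.map fun t =>
              interm D R (upd R W (.node ts) (r : ℕ) j s) t.1 (r' : ℕ) x).prod = 0 := by
            apply List.prod_eq_zero
            refine List.mem_map.2 ⟨⟨c, hcts⟩, List.mem_attach _ _, ?_⟩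
            rw [hrr]
            refine interm_col_zero D R _ c _ (fun i' => ?_) x
            simp only [upd]
            rw [if_neg]
            · exact hcol i'
            · rintro ⟨h1, -⟩; exact hcnu h1
          rw [hzero1, hzero2, mul_zero, mul_zero]
        · have hco : upd R W (.node ts) (r : ℕ) j s (.node ts) r' k = W (.node ts) r' k := by
            simp only [upd]
            rw [if_neg]
            rintro ⟨-, h2, -⟩; exact hrr h2
          rw [hco]
          congr 1
          congr 1
          refine List.map_congr_left fun a _ => ?_
          exact ih a.1 (sizeOf_attach_lt a) _ x
      · have hco : upd R W ν (r : ℕ) j s (.node ts) r' k = W (.node ts) r' k := by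
          simp only [upd]
          rw [if_neg]
          rintro ⟨h1, -⟩; exact hμν h1
        rw [hco]
        congr 1
        congr 1
        refine List.map_congr_left fun a _ => ?_
        exact ih a.1 (sizeOf_attach_lt a) _ x

end HTF
namespace HTF
open MTree
variable {N : ℕ}

theorem Rpar_eq (R : MTree N → ℕ) {T ν μ : MTree N} (hne : ν ≠ T)
    (hp : parentIn T ν = some μ) : Rpar R T ν = R μ := by
  rw [Rpar, if_neg hne, hp]; rfl

theorem interm_upd_col (D : Fin N → ℕ) (R : MTree N → ℕ)
    (W : ∀ ν : MTree N, Fin (R ν) → ℕ → ℝ) (T ν c : MTree N)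
    (hTnd : T.leafList.Nodup) (hTb : T.Branching)
    (hν : ν ∈ T.nodes) (hint : ν.IsInterior) (hc : c ∈ ν.children)
    (r : Fin (R ν)) (i : ℕ) (s : ℝ)
    (hrow : ∀ j : ℕ, j < Rpar R T ν → W ν r j = 0)
    (hcol : ∀ i' : Fin (R c), W c i' (r : ℕ) = 0) :
    ∀ μ : MTree N, μ ∈ T.nodes → ∀ k : ℕ,
      (∀ x : Idx D, interm D R (upd R W c i (r : ℕ) s) μ k x = interm D R W μ k x)
      ∨ (μ = c ∧ k = (r : ℕ)) ∨ (μ = ν ∧ Rpar R T ν ≤ k) := by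
  have hνleaf : ∀ i0 : Fin N, ν ≠ MTree.leaf i0 := by
    intro i0 h; rw [h] at hc; simp [children] at hc
  have hcν : sizeOf c < sizeOf ν := sizeOf_lt_of_mem_children hc
  intro μ
  induction μ using sizeOf_ind with
  | h μ ih =>
    intro hμ k
    cases μ with
    | leaf i0 =>
      by_cases hbad : MTree.leaf i0 = c ∧ k = (r : ℕ)
      · exact Or.inr (Or.inl hbad)
      · left
        intro x
        have hW : ∀ a : Fin (R (MTree.leaf i0)),
            upd R W c i (r : ℕ) s (.leaf i0) a k = W (.leaf i0) a k := by
          intro a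
          simp only [upd]
          rw [if_neg]
          rintro ⟨h1, -, h3⟩
          exact hbad ⟨h1, h3⟩
        rw [interm, interm]
        split
        · exact hW _
        · rfl
    | node ts =>
      have hmemts : ∀ t ∈ ts, t ∈ T.nodes := fun t ht =>
        children_mem_nodes hμ (by simpa [children] using ht)
      by_cases hμν : MTree.node ts = ν
      · subst hμν
        by_cases hk : k < Rpar R T (.node ts)
        · left
          intro x
          rw [interm, interm]
          refine Finset.sum_congr rfl fun r' _ => ?_
          have hcnts : c ≠ MTree.node ts := by intro h; rw [h] at hcν; omega
          have hco : upd R W c i (r : ℕ) s (.node ts) r' k = W (.node ts) r' k := by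
            simp only [upd]
            rw [if_neg]
            rintro ⟨h1, -⟩; exact hcnts h1.symm
          rw [hco]
          by_cases hrr : (r' : ℕ) = (r : ℕ)
          · have : r' = r := Fin.ext hrr
            subst this
            rw [hrow k hk, zero_mul, zero_mul]
          · congr 1
            congr 1
            refine List.map_congr_left fun a _ => ?_
            rcases ih a.1 (sizeOf_attach_lt a) (hmemts a.1 a.2) (r' : ℕ) with h | ⟨hac, hkr⟩ | ⟨haν, hge⟩
            · exact h x
            · exact absurd hkr hrr
            · exfalso
              have h1 := sizeOf_attach_lt a
              rw [haν] at h1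
              omega
        · exact Or.inr (Or.inr ⟨rfl, not_lt.1 hk⟩)
      · by_cases hμc : MTree.node ts = c
        · subst hμc
          by_cases hkr : k = (r : ℕ)
          · exact Or.inr (Or.inl ⟨rfl, hkr⟩)
          · left
            intro x
            rw [interm, interm]
            refine Finset.sum_congr rfl fun r' _ => ?_
            have hco : upd R W (.node ts) i (r : ℕ) s (.node ts) r' k = W (.node ts) r' k := by
              simp only [upd]
              rw [if_neg]
              rintro ⟨-, -, h3⟩; exact hkr h3
            rw [hco]
            congr 1
            congr 1
            refine List.map_congr_left fun a _ => ?_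
            rcases ih a.1 (sizeOf_attach_lt a) (hmemts a.1 a.2) (r' : ℕ) with h | ⟨hac, -⟩ | ⟨haν, -⟩
            · exact h x
            · exfalso; have h1 := sizeOf_attach_lt a; rw [hac] at h1; omega
            · exfalso; have h1 := sizeOf_attach_lt a; rw [haν] at h1; omega
        · left
          intro x
          rw [interm, interm]
          refine Finset.sum_congr rfl fun r' _ => ?_
          have hco : upd R W c i (r : ℕ) s (.node ts) r' k = W (.node ts) r' k := by
            simp only [upd]
            rw [if_neg]
            rintro ⟨h1, -⟩; exact hμc h1
          rw [hco]
          congr 1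
          congr 1
          refine List.map_congr_left fun a _ => ?_
          rcases ih a.1 (sizeOf_attach_lt a) (hmemts a.1 a.2) (r' : ℕ) with h | ⟨hac, hkr⟩ | ⟨haν, hge⟩
          · exact h x
          · -- a.1 = c is a child of node ts and of ν; parents agree, contradiction
            exfalso
            have hch1 : c ∈ (MTree.node ts).children := by
              rw [← hac]; simpa [children] using a.2
            have hp1 : parentIn T c = some (MTree.node ts) := parentIn_eq hTnd hTb hμ hch1
            have hp2 : parentIn T c = some ν := parentIn_eq hTnd hTb hν hc
            rw [hp1] at hp2
            exact hμν (Option.some.inj hp2)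
          · -- a.1 = ν is a child of node ts; so Rpar = R (node ts) > r'
            exfalso
            have hch1 : ν ∈ (MTree.node ts).children := by
              rw [← haν]; simpa [children] using a.2
            have hp1 : parentIn T ν = some (MTree.node ts) := parentIn_eq hTnd hTb hμ hch1
            have hνT : ν ≠ T := by
              intro h
              have h1 : sizeOf ν < sizeOf (MTree.node ts) := by
                rw [← haν]; exact sizeOf_attach_lt a
              have h2 := sizeOf_le_of_mem_nodes hμ
              rw [h] at h1
              omega
            have := Rpar_eq R hνT hp1
            rw [this] at hge
            have := r'.isLt
            omega

end HTF
open HTF HTF.MTree in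
theorem statement6' {N : ℕ} (D : Fin N → ℕ) (L : (Idx D → ℝ) → ℝ)
    (T : MTree N) (hT : T.Valid)
    (R : MTree N → ℕ)
    (W : ∀ ν : MTree N, Fin (R ν) → ℕ → ℝ)
    (ν : MTree N) (hν : ν ∈ T.nodes) (hint : ν.IsInterior)
    (c : MTree N) (hc : c ∈ ν.children) (r : Fin (R ν))
    (hrow : ∀ j : ℕ, j < Rpar R T ν → W ν r j = 0)
    (hcol : ∀ i : Fin (R c), W c i (r : ℕ) = 0) :
    (∀ j : ℕ, j < Rpar R T ν → dObj D L R T W ν (r : ℕ) j = 0) ∧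
    (∀ i : Fin (R c), dObj D L R T W c (i : ℕ) (r : ℕ) = 0) := by
  obtain ⟨hnd, -, hbr⟩ := hT
  constructor
  · intro j hj
    rw [dObj]
    have heq : (fun s : ℝ => obj D L R T (upd R W ν (r : ℕ) j s))
        = fun _ : ℝ => obj D L R T W := by
      funext s
      rw [obj, obj, endT, endT]
      congr 1
      funext x
      exact interm_upd_row D R W ν c hc r j s hcol T 0 x
    rw [heq, deriv_const]
  · intro i
    rw [dObj]
    have heq : (fun s : ℝ => obj D L R T (upd R W c (i : ℕ) (r : ℕ) s))
        = fun _ : ℝ => obj D L R T W := by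
      funext s
      rw [obj, obj, endT, endT]
      congr 1
      funext x
      rcases interm_upd_col D R W T ν c hnd hbr hν hint hc r (i : ℕ) s hrow hcol
        T (self_mem_nodes T) 0 with h | ⟨hTc, -⟩ | ⟨hTν, hle⟩
      · exact h x
      · exfalso
        have h1 := sizeOf_le_of_mem_nodes hν
        have h2 := sizeOf_lt_of_mem_children hc
        rw [hTc] at h1
        omega
      · exfalso
        have : Rpar R T ν = 1 := by rw [Rpar, if_pos hTν.symm]
        omega
    rw [heq, deriv_const]

open HTF HTF.MTree in
/-- let `ν` be an interior node, `c` a child of `ν`, and `r ∈ [R_ν]`.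
If both the `r`'th row of `W^(ν)` and the `r`'th column of `W^(c)` are zero, then the
partial derivatives of the objective `φ_H` with respect to the entries of the `r`'th
row of `W^(ν)` and with respect to the entries of the `r`'th column of `W^(c)` all
vanish. -/
theorem statement6 {N : ℕ} (D : Fin N → ℕ) (L : (Idx D → ℝ) → ℝ)
    (hL : Differentiable ℝ L) (hLs : LocSmooth D L) (hL0 : ∀ A, 0 ≤ L A)
    (T : MTree N) (hT : T.Valid)
    (R : MTree N → ℕ) (hR : ∀ i : Fin N, R (MTree.leaf i) = D i)
    (W : ∀ ν : MTree N, Fin (R ν) → ℕ → ℝ)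
    (ν : MTree N) (hν : ν ∈ T.nodes) (hint : ν.IsInterior)
    (c : MTree N) (hc : c ∈ ν.children) (r : Fin (R ν))
    (hrow : ∀ j : ℕ, j < Rpar R T ν → W ν r j = 0)
    (hcol : ∀ i : Fin (R c), W c i (r : ℕ) = 0) :
    (∀ j : ℕ, j < Rpar R T ν → dObj D L R T W ν (r : ℕ) j = 0) ∧
    (∀ i : Fin (R c), dObj D L R T W c (i : ℕ) (r : ℕ) = 0) := by
  exact statement6' D L T hT R W ν hν hint c hc r hrow hcol
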